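/- Let h : ℝ³ → ℝ be a twice continuously differentiable harmonic function (Δh = 0 everywhere on ℝ³) such that h(x) → 0 as ‖x‖ → ∞. Then h is identically zero on ℝ³. -/

import Mathlib

open MeasureTheory Real

noncomputable section

/-- ℝ³ with the Euclidean norm. -/
abbrev E3 : Type := EuclideanSpace ℝ (Fin 3)

/-- The `i`-th partial derivative of a scalar field on ℝ³. -/
def pd (i : Fin 3) (f : E3 → ℝ) (x : E3) : ℝ :=
  fderiv ℝ f x (EuclideanSpace.single i 1)

/-- Divergence of a vector field on ℝ³: div A = ∂₁A₁ + ∂₂A₂ + ∂₃A₃. -/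
def div3 (F : E3 → E3) (x : E3) : ℝ :=
  pd 0 (fun y => F y 0) x + pd 1 (fun y => F y 1) x + pd 2 (fun y => F y 2) x

/-- Curl of a vector field on ℝ³:
curl A = (∂₂A₃ − ∂₃A₂, ∂₃A₁ − ∂₁A₃, ∂₁A₂ − ∂₂A₁). -/
def curl3 (F : E3 → E3) (x : E3) : E3 :=
  (WithLp.equiv 2 (Fin 3 → ℝ)).symm
    ![pd 1 (fun y => F y 2) x - pd 2 (fun y => F y 1) x,
      pd 2 (fun y => F y 0) x - pd 0 (fun y => F y 2) x,
      pd 0 (fun y => F y 1) x - pd 1 (fun y => F y 0) x]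

/-- Gradient of a scalar field on ℝ³: ∇Φ = (∂₁Φ, ∂₂Φ, ∂₃Φ). -/
def grad3 (f : E3 → ℝ) (x : E3) : E3 :=
  (WithLp.equiv 2 (Fin 3 → ℝ)).symm ![pd 0 f x, pd 1 f x, pd 2 f x]

/-- Laplacian of a scalar field on ℝ³: ΔΦ = ∂₁²Φ + ∂₂²Φ + ∂₃²Φ. -/
def lap3 (f : E3 → ℝ) (x : E3) : ℝ :=
  pd 0 (pd 0 f) x + pd 1 (pd 1 f) x + pd 2 (pd 2 f) x

/-- Cross product on ℝ³. -/
def cross3 (a b : E3) : E3 :=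
  (WithLp.equiv 2 (Fin 3 → ℝ)).symm
    ![a 1 * b 2 - a 2 * b 1, a 2 * b 0 - a 0 * b 2, a 0 * b 1 - a 1 * b 0]


open Filter Set

section AuxLiouville

lemma aux_pd_add {f k : E3 → ℝ} {x : E3} (hf : DifferentiableAt ℝ f x)
    (hk : DifferentiableAt ℝ k x) (i : Fin 3) :
    pd i (fun y => f y + k y) x = pd i f x + pd i k x := by
  simp [pd, fderiv_fun_add hf hk]

lemma aux_pd_const_mul {k : E3 → ℝ} {x : E3} (hk : DifferentiableAt ℝ k x) (c : ℝ) (i : Fin 3) :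
    pd i (fun y => c * k y) x = c * pd i k x := by
  simp [pd, fderiv_const_mul hk]

lemma aux_pd_neg (f : E3 → ℝ) (x : E3) (i : Fin 3) :
    pd i (fun y => -(f y)) x = -(pd i f x) := by
  simp [pd, fderiv_neg]

lemma aux_lap3_neg (f : E3 → ℝ) (x : E3) : lap3 (fun y => -(f y)) x = -(lap3 f x) := by
  have e : ∀ i : Fin 3, pd i (fun y => -(f y)) = fun z => -(pd i f z) :=
    fun i => funext fun z => aux_pd_neg f z i
  unfold lap3
  rw [e 0, e 1, e 2, aux_pd_neg, aux_pd_neg, aux_pd_neg]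
  ring

lemma aux_pd_contDiff {g : E3 → ℝ} (hg : ContDiff ℝ 2 g) (i : Fin 3) :
    ContDiff ℝ 1 (pd i g) := by
  have h1 : ContDiff ℝ 1 (fun x => fderiv ℝ g x) := hg.fderiv_right (by norm_num)
  exact h1.clm_apply contDiff_const

lemma aux_lap3_add_const_mul {f k : E3 → ℝ} (hf : ContDiff ℝ 2 f) (hk : ContDiff ℝ 2 k)
    (c : ℝ) (x : E3) :
    lap3 (fun y => f y + c * k y) x = lap3 f x + c * lap3 k x := by
  have hfd : Differentiable ℝ f := hf.differentiable (by norm_num)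
  have hkd : Differentiable ℝ k := hk.differentiable (by norm_num)
  have step : ∀ i : Fin 3,
      pd i (pd i (fun y => f y + c * k y)) x = pd i (pd i f) x + c * pd i (pd i k) x := by
    intro i
    have e1 : pd i (fun y => f y + c * k y) = fun z => pd i f z + c * pd i k z := by
      funext z
      rw [aux_pd_add (hfd z) ((hkd z).const_mul c), aux_pd_const_mul (hkd z)]
    rw [e1, aux_pd_add ((aux_pd_contDiff hf i).differentiable (by norm_num) x)
          (((aux_pd_contDiff hk i).differentiable (by norm_num) x).const_mul c),
        aux_pd_const_mul ((aux_pd_contDiff hk i).differentiable (by norm_num) x)]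
  unfold lap3
  rw [step 0, step 1, step 2]
  ring

lemma aux_pd_normsq (j : Fin 3) (x : E3) : pd j (fun y : E3 => ‖y‖ ^ 2) x = 2 * x j := by
  have e : (fun y : E3 => ‖y‖ ^ 2) = fun y : E3 => (inner ℝ y y : ℝ) := by
    funext y; rw [real_inner_self_eq_norm_sq]
  rw [pd, e, fderiv_inner_apply ℝ differentiableAt_fun_id differentiableAt_fun_id]
  simp [EuclideanSpace.inner_single_right, EuclideanSpace.inner_single_left, real_inner_comm]
  ring

lemma aux_lap3_normsq (x : E3) : lap3 (fun y : E3 => ‖y‖ ^ 2) x = 6 := by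
  have step : ∀ j : Fin 3, pd j (pd j (fun y : E3 => ‖y‖ ^ 2)) x = 2 := by
    intro j
    have e : pd j (fun y : E3 => ‖y‖ ^ 2) = fun z : E3 => 2 * z j :=
      funext fun z => aux_pd_normsq j z
    rw [e, pd]
    have e2 : (fun z : E3 => 2 * z j) = fun z : E3 => 2 * (EuclideanSpace.proj (𝕜 := ℝ) j) z := rfl
    rw [e2, fderiv_const_mul ((EuclideanSpace.proj (𝕜 := ℝ) j).differentiableAt) 2,
        (EuclideanSpace.proj (𝕜 := ℝ) j).fderiv]
    simp [EuclideanSpace.single_apply]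
  unfold lap3
  rw [step 0, step 1, step 2]
  norm_num

lemma aux_second_deriv_nonpos_of_isLocalMax {φ : ℝ → ℝ} (hφ : ContDiff ℝ 2 φ)
    (hmax : IsLocalMax φ 0) : deriv (deriv φ) 0 ≤ 0 := by
  by_contra hlt
  push_neg at hlt
  have hφ' : ContDiff ℝ 1 (deriv φ) :=
    (contDiff_succ_iff_deriv.mp (hφ.of_le (by norm_num))).2.2
  have hcont : Continuous (deriv (deriv φ)) := hφ'.continuous_deriv le_rfl
  have hpos : ∀ᶠ t in nhds (0:ℝ), 0 < deriv (deriv φ) t :=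
    (hcont.continuousAt (x := 0)).eventually (eventually_gt_nhds hlt)
  obtain ⟨r, hr, hball⟩ := Metric.eventually_nhds_iff.mp hpos
  have hd1 : Differentiable ℝ φ := hφ.differentiable (by norm_num)
  have hmono : StrictMonoOn (deriv φ) (Icc 0 (r/2)) := by
    apply strictMonoOn_of_deriv_pos (convex_Icc _ _) (hφ'.continuous.continuousOn)
    intro t ht
    rw [interior_Icc] at ht
    apply hball
    simp only [Real.dist_eq, sub_zero]
    rw [abs_of_pos ht.1]
    linarith [ht.2, hr]
  have hd0 : deriv φ 0 = 0 := hmax.deriv_eq_zero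
  have hmono2 : StrictMonoOn φ (Icc 0 (r/2)) := by
    apply strictMonoOn_of_deriv_pos (convex_Icc _ _) hd1.continuous.continuousOn
    intro t ht
    rw [interior_Icc] at ht
    have := hmono (left_mem_Icc.mpr (by linarith)) ⟨le_of_lt ht.1, le_of_lt ht.2⟩ ht.1
    rwa [hd0] at this
  obtain ⟨δ, hδ, hle⟩ := Metric.eventually_nhds_iff.mp hmax
  set t := min (r/2) δ / 2 with ht
  have htpos : 0 < t := by positivity
  have h1 : φ 0 < φ t := by
    apply hmono2 (left_mem_Icc.mpr (by linarith)) _ htpos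
    constructor
    · linarith
    · calc t ≤ (r/2)/2 := by apply div_le_div_of_nonneg_right (min_le_left _ _); norm_num
        _ ≤ r/2 := by linarith
  have h2 : φ t ≤ φ 0 := by
    apply hle
    simp only [Real.dist_eq, sub_zero]
    rw [abs_of_pos htpos]
    calc t ≤ δ/2 := by apply div_le_div_of_nonneg_right (min_le_right _ _); norm_num
      _ < δ := by linarith
  linarith

lemma aux_deriv_comp_line {g : E3 → ℝ} (hg : Differentiable ℝ g) (x₀ e : E3) (t : ℝ) :
    deriv (fun s => g (x₀ + s • e)) t = fderiv ℝ g (x₀ + t • e) e := by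
  have hL : HasDerivAt (fun s : ℝ => x₀ + s • e) e t := by
    simpa using ((hasDerivAt_id t).smul_const e).const_add x₀
  exact ((hg (x₀ + t • e)).hasFDerivAt.comp_hasDerivAt t hL).deriv

lemma aux_lap3_nonpos_of_isLocalMax {g : E3 → ℝ} (hg : ContDiff ℝ 2 g) {x₀ : E3}
    (hmax : IsLocalMax g x₀) : lap3 g x₀ ≤ 0 := by
  have key : ∀ i : Fin 3, pd i (pd i g) x₀ ≤ 0 := by
    intro i
    set e := EuclideanSpace.single i (1:ℝ) with he
    have hLc : ContDiff ℝ 2 (fun t : ℝ => x₀ + t • e) :=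
      contDiff_const.add (contDiff_id.smul contDiff_const)
    have hφ : ContDiff ℝ 2 (fun t : ℝ => g (x₀ + t • e)) := hg.comp hLc
    have hφmax : IsLocalMax (fun t : ℝ => g (x₀ + t • e)) 0 := by
      have htd : Tendsto (fun t : ℝ => x₀ + t • e) (nhds 0) (nhds x₀) := by
        have := hLc.continuous.tendsto (0:ℝ)
        simpa using this
      have hev := htd.eventually hmax
      refine hev.mono fun t hle => ?_
      simpa using hle
    have h2 := aux_second_deriv_nonpos_of_isLocalMax hφ hφmax
    have hdφ : deriv (fun t : ℝ => g (x₀ + t • e)) = fun t => pd i g (x₀ + t • e) :=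
      funext fun t => aux_deriv_comp_line (hg.differentiable (by norm_num)) x₀ e t
    rw [hdφ] at h2
    have hpdC : ContDiff ℝ 1 (pd i g) := aux_pd_contDiff hg i
    have h3 : deriv (fun t : ℝ => pd i g (x₀ + t • e)) 0 = pd i (pd i g) x₀ := by
      have := aux_deriv_comp_line (hpdC.differentiable (by norm_num)) x₀ e 0
      simpa [pd] using this
    rw [h3] at h2
    exact h2
  have h0 := key 0; have h1 := key 1; have h2 := key 2
  unfold lap3; linarith

lemma aux_harmonic_nonpos (h : E3 → ℝ)
    (hC2 : ContDiff ℝ 2 h) (hharm : ∀ x : E3, lap3 h x = 0)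
    (hdecay : ∀ ε > (0 : ℝ), ∃ R : ℝ, ∀ x : E3, R < ‖x‖ → |h x| < ε) :
    ∀ x : E3, h x ≤ 0 := by
  intro x
  refine le_of_forall_pos_le_add fun δ hδ => ?_
  rw [zero_add]
  obtain ⟨R₀, hR₀⟩ := hdecay δ hδ
  set R : ℝ := max (|R₀| + 1) (‖x‖ + 1) with hR
  have hRpos : 0 < R := lt_of_lt_of_le (by positivity) (le_max_left _ _)
  have hR₀R : R₀ < R :=
    lt_of_le_of_lt (le_abs_self R₀) (lt_of_lt_of_le (by linarith) (le_max_left _ _))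
  have hxR : ‖x‖ < R := lt_of_lt_of_le (by linarith) (le_max_right _ _)
  have hR2 : (0:ℝ) < R ^ 2 := by positivity
  have claim : ∀ ε > (0:ℝ), h x ≤ δ + ε * R ^ 2 := by
    intro ε hε
    set g : E3 → ℝ := fun y => h y + ε * ‖y‖ ^ 2 with hg
    have hgC2 : ContDiff ℝ 2 g := hC2.add (contDiff_const.mul (contDiff_norm_sq ℝ))
    have hlapg : ∀ y, lap3 g y = 6 * ε := by
      intro y
      rw [hg, aux_lap3_add_const_mul hC2 (contDiff_norm_sq ℝ) ε y, hharm y, aux_lap3_normsq]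
      ring
    obtain ⟨x₀, hx₀mem, hx₀max⟩ :=
      (isCompact_closedBall (0:E3) R).exists_isMaxOn
        (Metric.nonempty_closedBall.mpr hRpos.le) hgC2.continuous.continuousOn
    have hx₀norm : ‖x₀‖ ≤ R := mem_closedBall_zero_iff.mp hx₀mem
    rcases eq_or_lt_of_le hx₀norm with heq | hlt
    · have hx₀far : |h x₀| < δ := hR₀ x₀ (by rw [heq]; exact hR₀R)
      have h1 : g x ≤ g x₀ := hx₀max (mem_closedBall_zero_iff.mpr hxR.le)
      have h2 : g x₀ = h x₀ + ε * R ^ 2 := by rw [hg]; simp [heq]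
      have h3 : h x ≤ g x := by
        rw [hg]
        have : 0 ≤ ε * ‖x‖ ^ 2 := by positivity
        simp only []
        linarith
      have h4 : h x₀ ≤ |h x₀| := le_abs_self _
      linarith
    · exfalso
      have hnhds : Metric.closedBall (0:E3) R ∈ nhds x₀ :=
        Filter.mem_of_superset (Metric.isOpen_ball.mem_nhds (mem_ball_zero_iff.mpr hlt))
          Metric.ball_subset_closedBall
      have hloc : IsLocalMax g x₀ := hx₀max.isLocalMax hnhds
      have := aux_lap3_nonpos_of_isLocalMax hgC2 hloc
      rw [hlapg x₀] at this
      linarith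
  by_contra hc
  push_neg at hc
  have hkey := claim ((h x - δ) / (2 * R ^ 2)) (div_pos (by linarith) (by positivity))
  have heq : (h x - δ) / (2 * R ^ 2) * R ^ 2 = (h x - δ) / 2 := by
    field_simp
  rw [heq] at hkey
  linarith

end AuxLiouville

/-- **Liouville-type theorem.** A C² harmonic function on ℝ³ that tends to 0 at infinity
is identically zero. -/
theorem harmonic_vanishing_at_infinity_eq_zero (h : E3 → ℝ)
    (hC2 : ContDiff ℝ 2 h) (hharm : ∀ x : E3, lap3 h x = 0)
    (hdecay : ∀ ε > (0 : ℝ), ∃ R : ℝ, ∀ x : E3, R < ‖x‖ → |h x| < ε) :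
    ∀ x : E3, h x = 0 := by
  intro x
  have h1 : h x ≤ 0 := aux_harmonic_nonpos h hC2 hharm hdecay x
  have h2 : -(h x) ≤ 0 := by
    have := aux_harmonic_nonpos (fun y => -(h y)) hC2.neg
      (fun z => by rw [aux_lap3_neg, hharm z]; ring)
      (fun ε hε => (hdecay ε hε).imp fun R hR z hz => by simpa [abs_neg] using hR z hz) x
    simpa using this
  linarith
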